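/- Let k be a field, let A and A' be linear categories over k, and let F : A → A' be a fully faithful linear functor. If the set of objects {F(x) : x an object of A} dominates A', then F is a Morita equivalence; that is, the induced linear functor F̂ : Kar(Mat(A)) → Kar(Mat(A')) between the completions is an equivalence of categories. -/

import Mathlib

open CategoryTheory CategoryTheory.Idempotents

namespace Morita9Aux

variable {C D : Type*} [Category C] [Category D]

lemma mapMat_faithful {C D : Type*} [Category C] [Preadditive C] [Category D] [Preadditive D]
    (F : C ⥤ D) [F.Additive] [F.Faithful] : F.mapMat_.Faithful where
  map_injective {M N} f g h := by
    ext i j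
    exact F.map_injective (congr_fun (congr_fun h i) j)

lemma mapMat_full {C D : Type*} [Category C] [Preadditive C] [Category D] [Preadditive D]
    (F : C ⥤ D) [F.Additive] [F.Full] : F.mapMat_.Full where
  map_surjective {M N} g := ⟨fun i j => F.preimage (g i j), by ext i j; exact F.map_preimage (g i j)⟩

lemma fe2_faithful (H : C ⥤ D) [H.Faithful] :
    ((functorExtension₂ C D).obj H).Faithful where
  map_injective {P Q} f g h := by
    apply Karoubi.hom_ext
    apply H.map_injective
    exact congrArg Karoubi.Hom.f h

lemma fe2_full (H : C ⥤ D) [H.Full] [H.Faithful] :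
    ((functorExtension₂ C D).obj H).Full where
  map_surjective {P Q} g := by
    refine ⟨⟨P.p ≫ H.preimage g.f ≫ Q.p, ?_⟩, ?_⟩
    · simp only [Category.assoc]
      rw [← Category.assoc P.p P.p, P.idem, Q.idem]
    · apply Karoubi.hom_ext
      have hg := g.comm
      dsimp [functorExtension₂, FunctorExtension₁.obj] at hg ⊢
      change H.map P.p ≫ g.f ≫ H.map Q.p = g.f at hg
      change H.map (P.p ≫ H.preimage g.f ≫ Q.p) = g.f
      simp only [H.map_comp, H.map_preimage, Category.assoc]
      erw [H.map_preimage]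
      exact hg

lemma essImage_of_retract (G : C ⥤ D) [G.Full] [G.Faithful] [IsIdempotentComplete C]
    {X : D} {Z : C} (σ : X ⟶ G.obj Z) (ρ : G.obj Z ⟶ X) (hσρ : σ ≫ ρ = 𝟙 X) :
    G.essImage X := by
  have hidem : G.preimage (ρ ≫ σ) ≫ G.preimage (ρ ≫ σ) = G.preimage (ρ ≫ σ) := by
    apply G.map_injective
    simp only [G.map_comp, G.map_preimage, Category.assoc]
    rw [← Category.assoc σ ρ, hσρ, Category.id_comp]
  obtain ⟨Y, i, e, hie, hei⟩ := IsIdempotentComplete.idempotents_split Z (G.preimage (ρ ≫ σ)) hidem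
  refine ⟨Y, ⟨⟨G.map i ≫ ρ, σ ≫ G.map e, ?_, ?_⟩⟩⟩
  · have h1 : (G.map i ≫ ρ) ≫ σ ≫ G.map e = G.map (i ≫ (e ≫ i) ≫ e) := by
      rw [hei]
      simp only [G.map_comp, G.map_preimage, Category.assoc]
    have h2 : i ≫ (e ≫ i) ≫ e = 𝟙 Y := by
      rw [← Category.assoc, ← Category.assoc, hie, Category.id_comp, hie]
    rw [h1, h2, G.map_id]
  · have h1 : σ ≫ G.map (e ≫ i) ≫ ρ = σ ≫ (ρ ≫ σ) ≫ ρ := by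
      rw [hei, G.map_preimage]
    calc (σ ≫ G.map e) ≫ G.map i ≫ ρ = σ ≫ G.map (e ≫ i) ≫ ρ := by
          simp only [G.map_comp, Category.assoc]
      _ = σ ≫ (ρ ≫ σ) ≫ ρ := h1
      _ = (σ ≫ ρ) ≫ (σ ≫ ρ) := by simp only [Category.assoc]
      _ = 𝟙 X := by rw [hσρ, Category.id_comp]

end Morita9Aux

/-- Let `k` be a field, `A` and `A'` linear categories over `k`, and
`F : A ⥤ A'` a fully faithful linear functor. If the set of objects `{F(x)}` dominates `A'`,
then `F` is a Morita equivalence: the induced linear functor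
`F̂ : Kar(Mat(A)) ⥤ Kar(Mat(A'))` between the completions is an equivalence. -/
theorem fully_faithful_dominating_is_morita_equivalence
    {k : Type*} [Field k]
    {A : Type*} [Category A] [Preadditive A] [Linear k A]
    {A' : Type*} [Category A'] [Preadditive A'] [Linear k A']
    (F : A ⥤ A') [F.Additive] [F.Linear k] [F.Full] [F.Faithful]
    (hdom : ∀ X' : A', ∃ (m : ℕ) (x : Fin m → A)
      (s : ∀ j, X' ⟶ F.obj (x j)) (r : ∀ j, F.obj (x j) ⟶ X'),
      ∑ j, s j ≫ r j = 𝟙 X') :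
    ((functorExtension₂ (C := Mat_ A) (D := Mat_ A')).obj F.mapMat_).IsEquivalence := by
  classical
  haveI : F.mapMat_.Faithful := Morita9Aux.mapMat_faithful F
  haveI : F.mapMat_.Full := Morita9Aux.mapMat_full F
  haveI : ((functorExtension₂ (C := Mat_ A) (D := Mat_ A')).obj F.mapMat_).Faithful :=
    Morita9Aux.fe2_faithful F.mapMat_
  haveI : ((functorExtension₂ (C := Mat_ A) (D := Mat_ A')).obj F.mapMat_).Full :=
    Morita9Aux.fe2_full F.mapMat_
  set G := (functorExtension₂ (C := Mat_ A) (D := Mat_ A')).obj F.mapMat_ with hG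
  refine { essSurj := ⟨fun P => ?_⟩ }
  choose m x s r hsr using hdom
  set M := P.X with hM
  -- the dominating object in Mat_ A
  let N : Mat_ A := ⟨Σ i : M.ι, Fin (m (M.X i)), fun p => x (M.X p.1) p.2⟩
  let S : M ⟶ F.mapMat_.obj N := fun i p =>
    if h : i = p.1 then eqToHom (congrArg M.X h) ≫ s (M.X p.1) p.2 else 0
  let R : F.mapMat_.obj N ⟶ M := fun p i =>
    if h : p.1 = i then r (M.X p.1) p.2 ≫ eqToHom (congrArg M.X h) else 0
  have hSR : S ≫ R = 𝟙 M := by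
    ext i i''
    rw [Mat_.comp_apply, Mat_.id_apply]
    erw [← Finset.univ_sigma_univ]
    erw [Finset.sum_sigma]
    by_cases h : i = i''
    · subst h
      rw [dif_pos rfl, eqToHom_refl]
      rw [Finset.sum_eq_single i]
      · rw [← hsr (M.X i)]
        apply Finset.sum_congr rfl
        intro j _
        simp only [S, R, dif_pos rfl, eqToHom_refl, Category.id_comp, Category.comp_id]
        erw [Category.id_comp, Category.comp_id]
        rfl
      · intro b _ hb
        apply Finset.sum_eq_zero
        intro j _
        have hni : ¬ (i = b) := fun hh => hb hh.symm
        simp only [S, R, dif_neg hni, Limits.zero_comp]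
      · intro hi; exact absurd (Finset.mem_univ i) hi
    · rw [dif_neg h]
      apply Finset.sum_eq_zero
      intro a _
      apply Finset.sum_eq_zero
      intro j _
      by_cases ha : i = a
      · subst ha
        simp only [S, R, dif_neg h, Limits.comp_zero]
      · simp only [S, R, dif_neg ha, Limits.zero_comp]
  -- transfer to the Karoubi envelope
  let e : G.obj ((toKaroubi (Mat_ A)).obj N) ≅ (toKaroubi (Mat_ A')).obj (F.mapMat_.obj N) :=
    ((functorExtension₂CompWhiskeringLeftToKaroubiIso (Mat_ A) (Mat_ A')).app F.mapMat_).app N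
  let σ : P ⟶ G.obj ((toKaroubi (Mat_ A)).obj N) :=
    P.decompId_i ≫ (toKaroubi (Mat_ A')).map S ≫ e.inv
  let ρ : G.obj ((toKaroubi (Mat_ A)).obj N) ⟶ P :=
    e.hom ≫ (toKaroubi (Mat_ A')).map R ≫ P.decompId_p
  have hσρ : σ ≫ ρ = 𝟙 P := by
    simp only [σ, ρ, Category.assoc]
    rw [Iso.inv_hom_id_assoc, ← Functor.map_comp_assoc, hSR, (toKaroubi (Mat_ A')).map_id,
      Category.id_comp, ← Karoubi.decompId]
  exact Morita9Aux.essImage_of_retract G σ ρ hσρ
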